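/- Let ℓ ≥ 3, let C be an ℓ×ℓ complex matrix with columns C₁, …, C_ℓ, and for each s ∈ {1,…,ℓ} and p ∈ {0,1,2} let γ_s^p ∈ ℂ. For z ∈ ℂ let N(z) be the ℓ×ℓ matrix whose s-th column is γ_s^0·C_s + γ_s^1·z·C_{s+1} + γ_s^2·z²·C_{s+2}, column indices taken modulo ℓ. Fix s, t ∈ ℤ/ℓ and define κ(s,t) = ℓ−1 if s = t, 0 if s = t−1, 1 if s = t−2, and otherwise the number of elements of the cyclic interval [s+1, t−1] in ℤ/ℓ; define μ(s,t) = 1 if s = t, 0 if s = t−1, ℓ−1 if s = t−2, and otherwise the number of elements of the cyclic interval [t−1, s−1] in ℤ/ℓ. Then there exist α, β ∈ ℂ, independent of z, such that for all z ∈ ℂ the determinant of the matrix obtained from N(z) by replacing its s-th column with C_t equals det C · ( α·z^{(ℓ−1)−κ(s,t)} + β·z^{(ℓ−1)+μ(s,t)} ). Consequently, if det C ≠ 0, then writing v for the quadratic polynomial with det N(z) = det C·v(z^ℓ), for every z with v(z^ℓ) ≠ 0 the linear system N(z)·E = C_t has a unique solution E ∈ ℂ^ℓ, and its s-th entry equals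 ( α·z^{(ℓ−1)−κ(s,t)} + β·z^{(ℓ−1)+μ(s,t)} ) / v(z^ℓ). -/

import Mathlib

open Matrix Finset Equiv

theorem cyclic_system_cramer_solution
    (ℓ : ℕ) (hℓ : 3 ≤ ℓ) [NeZero ℓ]
    (C : Matrix (Fin ℓ) (Fin ℓ) ℂ)
    (γ0 γ1 γ2 : Fin ℓ → ℂ)
    (N : ℂ → Matrix (Fin ℓ) (Fin ℓ) ℂ)
    (hN : ∀ z, N z = Matrix.of fun i c : Fin ℓ =>
      γ0 c * C i c + γ1 c * z * C i (c + 1) + γ2 c * z ^ 2 * C i (c + 2))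
    (s t : Fin ℓ)
    (κ μ : ℕ)
    (hκ : κ = if s = t then ℓ - 1 else if s = t - 1 then 0 else if s = t - 2 then 1
          else (t - s - 2 : Fin ℓ).val + 1)
    (hμ : μ = if s = t then 1 else if s = t - 1 then 0 else if s = t - 2 then ℓ - 1
          else (s - t : Fin ℓ).val + 1) :
    ∃ α β : ℂ,
      (∀ z : ℂ,
        ((N z).updateCol s (fun i => C i t)).det
          = C.det * (α * z ^ ((ℓ - 1) - κ) + β * z ^ ((ℓ - 1) + μ))) ∧
      (C.det ≠ 0 → ∀ z : ℂ, (N z).det ≠ 0 →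
        (∃! E : Fin ℓ → ℂ, (N z).mulVec E = fun i => C i t) ∧
        (∀ E : Fin ℓ → ℂ, (N z).mulVec E = (fun i => C i t) →
          E s = C.det * (α * z ^ ((ℓ - 1) - κ) + β * z ^ ((ℓ - 1) + μ)) / (N z).det)) := by
  classical
  -- basic Fin facts
  have h1v : ((1 : Fin ℓ)).val = 1 := by
    show 1 % ℓ = 1; exact Nat.mod_eq_of_lt (by omega)
  have h2v : ((2 : Fin ℓ)).val = 2 := by
    show 2 % ℓ = 2; exact Nat.mod_eq_of_lt (by omega)
  have hne1 : ∀ c : Fin ℓ, c + 1 ≠ c := by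
    intro c h
    have h' : c + 1 = c + 0 := by simpa using h
    have h2 := congrArg Fin.val (add_left_cancel h')
    rw [h1v] at h2
    simp at h2
  have hne2 : ∀ c : Fin ℓ, c + 2 ≠ c := by
    intro c h
    have h' : c + 2 = c + 0 := by simpa using h
    have h2 := congrArg Fin.val (add_left_cancel h')
    rw [h2v] at h2
    simp at h2
  have hne12 : ∀ c : Fin ℓ, c + 1 ≠ c + 2 := by
    intro c h
    have h2 := congrArg Fin.val (add_left_cancel h)
    rw [h1v, h2v] at h2
    exact absurd h2 (by omega)
  set m : ℕ := (s - t).val with hmdef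
  have hmlt : m < ℓ := (s - t).isLt
  have hm0 : s = t ↔ m = 0 := by
    constructor
    · intro h; simp [hmdef, h]
    · intro h
      have : s - t = 0 := by apply Fin.ext; simpa [hmdef] using h
      exact sub_eq_zero.mp this
  have hm1 : s = t - 1 ↔ m = ℓ - 1 := by
    constructor
    · intro h
      rw [hmdef, h]
      have h1 : t - 1 - t = -1 := by abel
      rw [h1, Fin.coe_neg, h1v]
      exact Nat.mod_eq_of_lt (by omega)
    · intro h
      have hst : s - t = -1 := by
        apply Fin.ext
        rw [← hmdef, h, Fin.coe_neg, h1v]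
        exact (Nat.mod_eq_of_lt (by omega)).symm
      have h3 := sub_eq_iff_eq_add.mp hst
      rw [h3]; abel
  have hm2 : s = t - 2 → m = ℓ - 2 := by
    intro h
    rw [hmdef, h]
    have h1 : t - 2 - t = -2 := by abel
    rw [h1, Fin.coe_neg, h2v]
    exact Nat.mod_eq_of_lt (by omega)
  have hts : s ≠ t → (t - s).val = ℓ - m := by
    intro h
    have h1 : t - s = -(s - t) := by abel
    have h0 : (s - t) ≠ 0 := sub_ne_zero.mpr h
    have h2 : m ≠ 0 := fun hh => h (hm0.mpr hh)
    rw [h1, Fin.coe_neg, ← hmdef]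
    exact Nat.mod_eq_of_lt (by omega)
  -- the two exponents
  have he1 : ℓ - 1 - κ = m := by
    rw [hκ]
    split_ifs with hEq hEq1 hEq2
    · rw [hm0.mp hEq]; omega
    · rw [hm1.mp hEq1]; omega
    · rw [hm2 hEq2]; omega
    · have hmne : m ≠ 0 := fun hh => hEq (hm0.mpr hh)
      have hmtop : m ≠ ℓ - 1 := fun hh => hEq1 (hm1.mpr hh)
      have hts' : (t - s).val = ℓ - m := hts hEq
      have hsub : (t - s - 2).val = (t - s).val - 2 := by
        rw [Fin.sub_val_of_le (by rw [Fin.le_def, h2v]; omega), h2v]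
      omega
  have he2 : s ≠ t - 1 → ℓ - 1 + μ = m + ℓ := by
    intro hst1
    rw [hμ]
    by_cases hEq : s = t
    · rw [if_pos hEq, hm0.mp hEq]; omega
    · rw [if_neg hEq, if_neg hst1]
      by_cases hEq2 : s = t - 2
      · rw [if_pos hEq2, hm2 hEq2]; omega
      · rw [if_neg hEq2]; omega
  -- combinatorial data of a permutation
  set d : Equiv.Perm (Fin ℓ) → Fin ℓ → ℕ :=
    fun σ c => if σ c = c then 0 else if σ c = c + 1 then 1 else 2 with hd
  set g : Equiv.Perm (Fin ℓ) → Fin ℓ → ℂ :=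
    fun σ c => if σ c = c then γ0 c else if σ c = c + 1 then γ1 c
      else if σ c = c + 2 then γ2 c else 0 with hg
  set D : Equiv.Perm (Fin ℓ) → ℕ := fun σ => ∑ c ∈ univ.erase s, d σ c with hD
  set A : ℂ → Matrix (Fin ℓ) (Fin ℓ) ℂ := fun z => Matrix.of fun i c =>
    if c = s then (if i = t then (1:ℂ) else 0)
    else γ0 c * (if i = c then 1 else 0) + γ1 c * z * (if i = c + 1 then 1 else 0)
      + γ2 c * z ^ 2 * (if i = c + 2 then 1 else 0) with hA
  -- factorization of the updated matrix
  have hupdate : ∀ z, (N z).updateCol s (fun i => C i t) = C * A z := by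
    intro z
    ext i c
    rw [Matrix.updateCol_apply, Matrix.mul_apply]
    by_cases hc : c = s
    · simp only [hc, hA, Matrix.of_apply, if_pos rfl, if_true]
      simp [mul_ite, mul_one, mul_zero]
    · simp only [hc, if_false, hA, Matrix.of_apply, hN z, Matrix.of_apply]
      simp [mul_add, Finset.sum_add_distrib, mul_ite, mul_one, mul_zero,
        mul_comm, mul_assoc, mul_left_comm]
  have hne21 : ∀ c : Fin ℓ, c + 2 ≠ c + 1 := fun c hh => hne12 c hh.symm
  have hL1 : ℓ ≠ 1 := by omega
  have h20 : (2 : Fin ℓ) ≠ 0 := by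
    intro h
    have h2 := congrArg Fin.val h
    rw [h2v] at h2
    simp at h2
  -- entries of A in terms of g and d
  have hAentry : ∀ (z : ℂ) (σ : Equiv.Perm (Fin ℓ)) (c : Fin ℓ), c ≠ s →
      A z (σ c) c = g σ c * z ^ d σ c := by
    intro z σ c hc
    simp only [hA, hg, hd, Matrix.of_apply, if_neg hc]
    by_cases h0 : σ c = c
    · simp [h0, hne1 c, hne2 c, hL1, h20]
    · by_cases h1 : σ c = c + 1
      · simp [h1, hne1 c, hne12 c, hne21 c]
        try ring
      · by_cases h2 : σ c = c + 2
        · simp [h0, h1, h2, hne2 c, hne21 c]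
          try ring
        · simp [h0, h1, h2]
  have hdet1 : ∀ z, ((N z).updateCol s fun i => C i t).det = C.det * (A z).det := by
    intro z; rw [hupdate z, Matrix.det_mul]
  have hAss : ∀ (z : ℂ) (i : Fin ℓ), A z i s = if i = t then 1 else 0 := by
    intro z i; simp [hA]
  have hprod : ∀ (z : ℂ) (σ : Equiv.Perm (Fin ℓ)),
      ∏ c : Fin ℓ, A z (σ c) c
        = (if σ s = t then (1:ℂ) else 0) * ((∏ c ∈ univ.erase s, g σ c) * z ^ D σ) := by
    intro z σ
    rw [← Finset.mul_prod_erase univ _ (Finset.mem_univ s), hAss z (σ s)]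
    congr 1
    rw [show (∏ c ∈ univ.erase s, A z (σ c) c) = ∏ c ∈ univ.erase s, g σ c * z ^ d σ c from
      Finset.prod_congr rfl (fun c hcm => hAentry z σ c (Finset.mem_erase.mp hcm).1),
      Finset.prod_mul_distrib, Finset.prod_pow_eq_pow_sum]
  have hDbound : ∀ σ, D σ ≤ 2 * (ℓ - 1) := by
    intro σ
    have hcard : (univ.erase s).card = ℓ - 1 := by
      rw [Finset.card_erase_of_mem (Finset.mem_univ s), Finset.card_univ, Fintype.card_fin]
    have h1 : D σ ≤ ∑ _c ∈ univ.erase s, 2 := by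
      apply Finset.sum_le_sum
      intro c _
      simp only [hd]
      split_ifs <;> omega
    rw [Finset.sum_const, hcard, smul_eq_mul] at h1
    omega
  open Fin.NatCast Fin.CommRing in
  have hDmod : ∀ σ : Equiv.Perm (Fin ℓ), σ s = t →
      (∀ c ∈ univ.erase s, g σ c ≠ 0) → D σ % ℓ = m := by
    intro σ hσs hgn
    have hcast : ∀ c ∈ univ.erase s, ((d σ c : ℕ) : Fin ℓ) = σ c - c := by
      intro c hcm
      have hgc := hgn c hcm
      simp only [hd, hg] at hgc ⊢
      by_cases h0 : σ c = c
      · simp [h0]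
      · by_cases h1 : σ c = c + 1
        · simp [h0, h1]
        · by_cases h2 : σ c = c + 2
          · rw [if_neg h0, if_neg h1, h2, add_sub_cancel_left, Nat.cast_ofNat]
          · rw [if_neg h0, if_neg h1, if_neg h2] at hgc
            exact absurd rfl hgc
    have hsum : ((D σ : ℕ) : Fin ℓ) = s - t := by
      rw [hD, Nat.cast_sum, Finset.sum_congr rfl hcast, Finset.sum_sub_distrib,
        Finset.sum_erase_eq_sub (Finset.mem_univ s), Finset.sum_erase_eq_sub (Finset.mem_univ s),
        hσs, Equiv.sum_comp σ (fun x => x)]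
      abel
    have hval := congrArg Fin.val hsum
    rw [Fin.val_natCast] at hval
    exact hval
  have hdeg : ∀ σ : Equiv.Perm (Fin ℓ), σ s = t → (∀ c ∈ univ.erase s, g σ c ≠ 0) →
      D σ = m ∨ (s ≠ t - 1 ∧ D σ = m + ℓ) := by
    intro σ hσs hgn
    have hmod := hDmod σ hσs hgn
    have hb := hDbound σ
    have hq : D σ / ℓ < 2 := Nat.div_lt_of_lt_mul (by omega)
    have hdm := Nat.div_add_mod (D σ) ℓ
    rw [hmod] at hdm
    have h2cases : D σ / ℓ = 0 ∨ D σ / ℓ = 1 := by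
      rcases Nat.lt_succ_iff_lt_or_eq.mp hq with h' | h'
      · exact Or.inl (Nat.lt_one_iff.mp h')
      · exact Or.inr h'
    rcases h2cases with h | h
    · left; rw [h] at hdm; omega
    · right
      rw [h] at hdm
      constructor
      · intro hst1
        have := hm1.mp hst1
        omega
      · omega
  set α : ℂ := ∑ σ : Equiv.Perm (Fin ℓ), if σ s = t ∧ D σ = m then
      ((Equiv.Perm.sign σ : ℤ) : ℂ) * ∏ c ∈ univ.erase s, g σ c else 0 with hα
  set β : ℂ := ∑ σ : Equiv.Perm (Fin ℓ), if σ s = t ∧ D σ ≠ m then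
      ((Equiv.Perm.sign σ : ℤ) : ℂ) * ∏ c ∈ univ.erase s, g σ c else 0 with hβ
  have hdetA : ∀ z : ℂ, (A z).det = α * z ^ (ℓ - 1 - κ) + β * z ^ (ℓ - 1 + μ) := by
    intro z
    rw [Matrix.det_apply', hα, hβ, Finset.sum_mul, Finset.sum_mul, ← Finset.sum_add_distrib]
    apply Finset.sum_congr rfl
    intro σ _
    rw [hprod z σ]
    by_cases hσs : σ s = t
    · by_cases hDm : D σ = m
      · rw [if_pos (show σ s = t ∧ D σ = m from ⟨hσs, hDm⟩),
          if_neg (show ¬(σ s = t ∧ D σ ≠ m) from fun h => h.2 hDm), if_pos hσs, he1, ← hDm]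
        ring
      · rw [if_neg (show ¬(σ s = t ∧ D σ = m) from fun h => hDm h.2),
          if_pos (show σ s = t ∧ D σ ≠ m from ⟨hσs, hDm⟩), if_pos hσs]
        by_cases hg0 : ∀ c ∈ univ.erase s, g σ c ≠ 0
        · rcases hdeg σ hσs hg0 with h | ⟨hst1, h⟩
          · exact absurd h hDm
          · rw [he2 hst1, h]; ring
        · push_neg at hg0
          obtain ⟨c, hcm, hc0⟩ := hg0
          rw [Finset.prod_eq_zero hcm hc0]
          ring
    · rw [if_neg (show ¬(σ s = t ∧ D σ = m) from fun h => hσs h.1),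
        if_neg (show ¬(σ s = t ∧ D σ ≠ m) from fun h => hσs h.1), if_neg hσs]
      ring
  have hpart1 : ∀ z : ℂ, ((N z).updateCol s fun i => C i t).det
      = C.det * (α * z ^ (ℓ - 1 - κ) + β * z ^ (ℓ - 1 + μ)) := by
    intro z; rw [hdet1 z, hdetA z]
  refine ⟨α, β, hpart1, ?_⟩
  intro hC z hNz
  have hu : IsUnit (N z).det := isUnit_iff_ne_zero.mpr hNz
  have hEs : ∀ E : Fin ℓ → ℂ, (N z).mulVec E = (fun i => C i t) →
      E s = C.det * (α * z ^ (ℓ - 1 - κ) + β * z ^ (ℓ - 1 + μ)) / (N z).det := by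
    intro E hE
    have hcr : Matrix.cramer (N z) ((N z).mulVec E) = (N z).det • E := by
      rw [Matrix.cramer_eq_adjugate_mulVec, Matrix.mulVec_mulVec, Matrix.adjugate_mul,
        Matrix.smul_mulVec, Matrix.one_mulVec]
    rw [hE] at hcr
    have h1 := congrFun hcr s
    rw [Matrix.cramer_apply] at h1
    rw [hpart1 z] at h1
    simp only [Pi.smul_apply, smul_eq_mul] at h1
    rw [eq_div_iff hNz]
    linear_combination -h1
  refine ⟨⟨(N z)⁻¹.mulVec (fun i => C i t), ?_, ?_⟩, hEs⟩
  · show (N z).mulVec ((N z)⁻¹.mulVec fun i => C i t) = fun i => C i t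
    rw [Matrix.mulVec_mulVec, Matrix.mul_nonsing_inv _ hu, Matrix.one_mulVec]
  · intro E hE
    have hE' : (N z).mulVec E = fun i => C i t := hE
    have hinv : (N z)⁻¹.mulVec ((N z).mulVec E) = E := by
      rw [Matrix.mulVec_mulVec, Matrix.nonsing_inv_mul _ hu, Matrix.one_mulVec]
    rw [← hinv, hE']
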